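/- In dimension d = 3, three orthonormal bases cannot distinguish all pure states: for any three orthonormal bases B₁, B₂, B₃ of ℂ³, there exist two distinct pure states ρ₁ ≠ ρ₂ such that ⟨φ, ρ₁ φ⟩ = ⟨φ, ρ₂ φ⟩ for every vector φ in B₁ ∪ B₂ ∪ B₃. -/

import Mathlib

open scoped InnerProductSpace
open Matrix Complex

noncomputable section ThreeBases

/-- Parametrization of traceless hermitian 3×3 matrices by `ℝ⁸`. -/
def Lmat (x : Fin 8 → ℝ) : Matrix (Fin 3) (Fin 3) ℂ :=
  !![(x 0 : ℂ), (x 2 : ℂ) + (x 3 : ℂ) * I, (x 4 : ℂ) + (x 5 : ℂ) * I;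
     (x 2 : ℂ) - (x 3 : ℂ) * I, (x 1 : ℂ), (x 6 : ℂ) + (x 7 : ℂ) * I;
     (x 4 : ℂ) - (x 5 : ℂ) * I, (x 6 : ℂ) - (x 7 : ℂ) * I, -(x 0 : ℂ) - (x 1 : ℂ)]

lemma Lmat_add (x y : Fin 8 → ℝ) : Lmat (x + y) = Lmat x + Lmat y := by
  ext i j
  fin_cases i <;> fin_cases j <;> simp [Lmat] <;> push_cast <;> ring

lemma Lmat_smul (r : ℝ) (x : Fin 8 → ℝ) : Lmat (r • x) = (r : ℂ) • Lmat x := by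
  ext i j
  fin_cases i <;> fin_cases j <;> simp [Lmat] <;> push_cast <;> ring

lemma Lmat_herm (x : Fin 8 → ℝ) : (Lmat x).IsHermitian := by
  unfold Matrix.IsHermitian
  ext i j
  fin_cases i <;> fin_cases j <;>
    simp [Lmat, Matrix.conjTranspose_apply, Complex.ext_iff]

lemma Lmat_trace (x : Fin 8 → ℝ) : (Lmat x).trace = 0 := by
  simp [Matrix.trace_fin_three, Lmat]

lemma Lmat_eq_zero {x : Fin 8 → ℝ} (h : Lmat x = 0) : x = 0 := by
  funext i
  have h00 := congrFun (congrFun h 0) 0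
  have h11 := congrFun (congrFun h 1) 1
  have h01 := congrFun (congrFun h 0) 1
  have h02 := congrFun (congrFun h 0) 2
  have h12 := congrFun (congrFun h 1) 2
  simp [Lmat, Complex.ext_iff] at h00 h11 h01 h02 h12
  fin_cases i <;> simp <;> tauto


abbrev E3 := EuclideanSpace ℂ (Fin 3)

/-- The real quadratic-form functional `x ↦ re ⟪v k, (Lmat x) (v k)⟫` packaged as a linear map. -/
def qF (v : Fin 6 → E3) : (Fin 8 → ℝ) →ₗ[ℝ] (Fin 6 → ℝ) where
  toFun x := fun k => (inner ℂ (v k) (Matrix.toEuclideanLin (Lmat x) (v k)) : ℂ).re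
  map_add' x y := by
    funext k
    show (inner ℂ (v k) (Matrix.toEuclideanLin (Lmat (x + y)) (v k)) : ℂ).re = _
    rw [Lmat_add, map_add, LinearMap.add_apply, inner_add_right]
    simp
  map_smul' r x := by
    funext k
    show (inner ℂ (v k) (Matrix.toEuclideanLin (Lmat (r • x)) (v k)) : ℂ).re = _
    rw [Lmat_smul, _root_.map_smul, LinearMap.smul_apply, inner_smul_right]
    simp [Complex.re_ofReal_mul]


lemma cont_aux (x y : Fin 8 → ℝ) :
    Continuous fun θ : ℝ => ((Lmat (Real.cos θ • x + Real.sin θ • y)).det).re := by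
  apply Complex.continuous_re.comp
  apply Continuous.matrix_det
  apply continuous_matrix
  intro i j
  fin_cases i <;> fin_cases j <;> simp [Lmat] <;> fun_prop

lemma exists_theta (x y : Fin 8 → ℝ) :
    ∃ θ : ℝ, ((Lmat (Real.cos θ • x + Real.sin θ • y)).det).re = 0 := by
  set f := fun θ : ℝ => ((Lmat (Real.cos θ • x + Real.sin θ • y)).det).re with hf
  have hcont : Continuous f := cont_aux x y
  have hodd : ∀ θ, f (θ + Real.pi) = - f θ := by
    intro θ
    have hz : Real.cos (θ + Real.pi) • x + Real.sin (θ + Real.pi) • y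
        = (-1 : ℝ) • (Real.cos θ • x + Real.sin θ • y) := by
      funext i
      simp [Real.cos_add_pi, Real.sin_add_pi]
      ring
    have hneg : ((-1 : ℝ) : ℂ) • Lmat (Real.cos θ • x + Real.sin θ • y)
        = - Lmat (Real.cos θ • x + Real.sin θ • y) := by norm_num
    simp only [hf, hz, Lmat_smul, hneg, Matrix.det_neg, Fintype.card_fin]
    norm_num
  rcases lt_trichotomy (f 0) 0 with h|h|h
  · have h2 : 0 < f Real.pi := by
      have := hodd 0
      simp only [zero_add] at this
      linarith
    obtain ⟨θ, _, hθ⟩ := intermediate_value_Icc Real.pi_pos.le hcont.continuousOn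
      (Set.mem_Icc.2 ⟨h.le, h2.le⟩)
    exact ⟨θ, hθ⟩
  · exact ⟨0, h⟩
  · have h2 : f Real.pi < 0 := by
      have := hodd 0
      simp only [zero_add] at this
      linarith
    obtain ⟨θ, _, hθ⟩ := intermediate_value_Icc' Real.pi_pos.le hcont.continuousOn
      (Set.mem_Icc.2 ⟨h2.le, h.le⟩)
    exact ⟨θ, hθ⟩

lemma exists_C (v : Fin 6 → E3) :
    ∃ C : Matrix (Fin 3) (Fin 3) ℂ, C.IsHermitian ∧ C ≠ 0 ∧ C.trace = 0 ∧ (C.det).re = 0 ∧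
      ∀ k, (inner ℂ (v k) (Matrix.toEuclideanLin C (v k)) : ℂ) = 0 := by
  classical
  set F := qF v with hF
  have hrn := F.finrank_range_add_finrank_ker
  have hdom : Module.finrank ℝ (Fin 8 → ℝ) = 8 := by simp
  have hcod : Module.finrank ℝ (Fin 6 → ℝ) = 6 := by simp
  have hr6 : Module.finrank ℝ (LinearMap.range F) ≤ 6 := by
    have := Submodule.finrank_le (LinearMap.range F)
    omega
  have hker : 2 ≤ Module.finrank ℝ (LinearMap.ker F) := by omega
  set K := LinearMap.ker F with hK
  let b : Module.Basis (Fin (Module.finrank ℝ K)) ℝ K := Module.finBasis ℝ K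
  let i0 : Fin (Module.finrank ℝ K) := ⟨0, by omega⟩
  let i1 : Fin (Module.finrank ℝ K) := ⟨1, by omega⟩
  have hi01 : i0 ≠ i1 := by simp [i0, i1, Fin.ext_iff]
  let u : K := b i0
  let w : K := b i1
  have hindep : ∀ a c : ℝ, a • (u : Fin 8 → ℝ) + c • (w : Fin 8 → ℝ) = 0 → a = 0 ∧ c = 0 := by
    intro a c h
    have h' : a • u + c • w = 0 := by
      apply Subtype.ext
      simpa using h
    have h0 := congrArg (fun g => g i0) (congrArg b.repr h')
    have h1 := congrArg (fun g => g i1) (congrArg b.repr h')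
    simp [u, w, Module.Basis.repr_self, Finsupp.single_apply, hi01, hi01.symm] at h0 h1
    exact ⟨h0, h1⟩
  obtain ⟨θ, hθ⟩ := exists_theta (u : Fin 8 → ℝ) (w : Fin 8 → ℝ)
  have hzK : Real.cos θ • (u : Fin 8 → ℝ) + Real.sin θ • (w : Fin 8 → ℝ) ∈ K :=
    K.add_mem (K.smul_mem _ u.2) (K.smul_mem _ w.2)
  refine ⟨Lmat (Real.cos θ • (u : Fin 8 → ℝ) + Real.sin θ • (w : Fin 8 → ℝ)), Lmat_herm _, ?_, Lmat_trace _, hθ, ?_⟩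
  · intro h
    have hz0 := Lmat_eq_zero h
    obtain ⟨ha, hc⟩ := hindep _ _ hz0
    have := Real.cos_sq_add_sin_sq θ
    rw [ha, hc] at this
    norm_num at this
  · intro k
    have hmem : F (Real.cos θ • (u : Fin 8 → ℝ) + Real.sin θ • (w : Fin 8 → ℝ)) = 0 :=
      LinearMap.mem_ker.mp hzK
    have hre : (inner ℂ (v k) (Matrix.toEuclideanLin (Lmat (Real.cos θ • (u : Fin 8 → ℝ) + Real.sin θ • (w : Fin 8 → ℝ))) (v k)) : ℂ).re = 0 := by
      have := congrFun hmem k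
      simpa [hF, qF] using this
    have hsym := (Matrix.isHermitian_iff_isSymmetric.1
      (Lmat_herm (Real.cos θ • (u : Fin 8 → ℝ) + Real.sin θ • (w : Fin 8 → ℝ))))
    have him : (inner ℂ (v k) (Matrix.toEuclideanLin (Lmat (Real.cos θ • (u : Fin 8 → ℝ) + Real.sin θ • (w : Fin 8 → ℝ))) (v k)) : ℂ).im = 0 := by
      have hconj : (starRingEnd ℂ) (inner ℂ (v k)
          (Matrix.toEuclideanLin (Lmat (Real.cos θ • (u : Fin 8 → ℝ) + Real.sin θ • (w : Fin 8 → ℝ))) (v k)) : ℂ)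
          = inner ℂ (v k) (Matrix.toEuclideanLin (Lmat (Real.cos θ • (u : Fin 8 → ℝ) + Real.sin θ • (w : Fin 8 → ℝ))) (v k)) := by
        rw [inner_conj_symm]
        exact hsym _ _
      exact Complex.conj_eq_iff_im.mp hconj
    exact Complex.ext hre him

lemma key3 (μ : Fin 3 → ℝ) (hsum : μ 0 + μ 1 + μ 2 = 0) (hprod : μ 0 * μ 1 * μ 2 = 0)
    (hne : ¬ (μ 0 = 0 ∧ μ 1 = 0 ∧ μ 2 = 0)) :
    ∃ i j : Fin 3, i ≠ j ∧ ∀ n : Fin 3 → ℝ,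
      μ 0 * n 0 + μ 1 * n 1 + μ 2 * n 2 = 0 → n i = n j := by
  rcases mul_eq_zero.mp hprod with h|h2
  · rcases mul_eq_zero.mp h with h0|h1
    · refine ⟨1, 2, by decide, fun n hn => ?_⟩
      have hμ1 : μ 1 ≠ 0 := fun h1 => hne ⟨h0, h1, by linarith⟩
      have h2' : μ 2 = -μ 1 := by linarith
      have : μ 1 * (n 1 - n 2) = 0 := by rw [h0, h2'] at hn; ring_nf; ring_nf at hn; linarith
      rcases mul_eq_zero.mp this with h|h
      · exact absurd h hμ1
      · linarith
    · refine ⟨0, 2, by decide, fun n hn => ?_⟩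
      have hμ0 : μ 0 ≠ 0 := fun h0 => hne ⟨h0, h1, by linarith⟩
      have h2' : μ 2 = -μ 0 := by linarith
      have : μ 0 * (n 0 - n 2) = 0 := by rw [h1, h2'] at hn; ring_nf; ring_nf at hn; linarith
      rcases mul_eq_zero.mp this with h|h
      · exact absurd h hμ0
      · linarith
  · refine ⟨0, 1, by decide, fun n hn => ?_⟩
    have hμ0 : μ 0 ≠ 0 := fun h0 => hne ⟨h0, by linarith, h2⟩
    have h1' : μ 1 = -μ 0 := by linarith
    have : μ 0 * (n 0 - n 1) = 0 := by rw [h2, h1'] at hn; ring_nf; ring_nf at hn; linarith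
    rcases mul_eq_zero.mp this with h|h
    · exact absurd h hμ0
    · linarith

lemma herm_expansion {C : Matrix (Fin 3) (Fin 3) ℂ} (hC : C.IsHermitian) (φ : E3) :
    (inner ℂ φ (Matrix.toEuclideanLin C φ) : ℂ)
      = ∑ i, (hC.eigenvalues i : ℂ) *
          ((‖(inner ℂ (hC.eigenvectorBasis i) φ : ℂ)‖ ^ 2 : ℝ) : ℂ) := by
  have hTV : ∀ i, Matrix.toEuclideanLin C (hC.eigenvectorBasis i)
      = (hC.eigenvalues i : ℂ) • hC.eigenvectorBasis i := by
    intro i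
    apply (WithLp.equiv 2 (Fin 3 → ℂ)).injective
    rw [show (WithLp.equiv 2 (Fin 3 → ℂ)) (Matrix.toEuclideanLin C (hC.eigenvectorBasis i))
        = C *ᵥ (WithLp.equiv 2 (Fin 3 → ℂ)) (hC.eigenvectorBasis i) from rfl]
    rw [show (WithLp.equiv 2 (Fin 3 → ℂ)) (hC.eigenvectorBasis i)
        = ⇑(hC.eigenvectorBasis i) from rfl]
    rw [hC.mulVec_eigenvectorBasis i]
    rw [show (WithLp.equiv 2 (Fin 3 → ℂ)) ((hC.eigenvalues i : ℂ) • hC.eigenvectorBasis i)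
        = (hC.eigenvalues i : ℂ) • ⇑(hC.eigenvectorBasis i) from rfl]
    funext j
    simp [Complex.real_smul]
  have h1 : Matrix.toEuclideanLin C φ
      = ∑ i, ((inner ℂ (hC.eigenvectorBasis i) φ : ℂ) * (hC.eigenvalues i : ℂ))
          • hC.eigenvectorBasis i := by
    conv_lhs => rw [← (hC.eigenvectorBasis).sum_repr' φ]
    rw [map_sum]
    refine Finset.sum_congr rfl fun i _ => ?_
    rw [_root_.map_smul, hTV i, smul_smul]
  rw [h1, inner_sum]
  refine Finset.sum_congr rfl fun i _ => ?_
  rw [inner_smul_right]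
  have hc : (inner ℂ φ (hC.eigenvectorBasis i) : ℂ)
      = (starRingEnd ℂ) (inner ℂ (hC.eigenvectorBasis i) φ : ℂ) := (inner_conj_symm _ _).symm
  rw [hc]
  push_cast
  rw [← Complex.mul_conj']
  ring

lemma exists_pair {C : Matrix (Fin 3) (Fin 3) ℂ} (hC : C.IsHermitian) (h0 : C ≠ 0)
    (htr : C.trace = 0) (hdet : (C.det).re = 0) :
    ∃ ψ₁ ψ₂ : E3, ‖ψ₁‖ = 1 ∧ ‖ψ₂‖ = 1 ∧ (inner ℂ ψ₂ ψ₁ : ℂ) = 0 ∧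
      ∀ φ : E3, (inner ℂ φ (Matrix.toEuclideanLin C φ) : ℂ) = 0 →
        ‖(inner ℂ φ ψ₁ : ℂ)‖ ^ 2 = ‖(inner ℂ φ ψ₂ : ℂ)‖ ^ 2 := by
  have hUstar : (star (Matrix.IsHermitian.eigenvectorUnitary hC : Matrix (Fin 3) (Fin 3) ℂ))
      * (Matrix.IsHermitian.eigenvectorUnitary hC : Matrix (Fin 3) (Fin 3) ℂ) = 1 :=
    Matrix.mem_unitaryGroup_iff'.mp (Matrix.IsHermitian.eigenvectorUnitary hC).2
  have ht : C.trace = ∑ i, (hC.eigenvalues i : ℂ) := by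
    conv_lhs => rw [hC.spectral_theorem, Unitary.conjStarAlgAut_apply]
    rw [Matrix.trace_mul_cycle, hUstar, one_mul, Matrix.trace_diagonal]
    simp
  have hsum : hC.eigenvalues 0 + hC.eigenvalues 1 + hC.eigenvalues 2 = 0 := by
    rw [htr] at ht
    have : ((hC.eigenvalues 0 + hC.eigenvalues 1 + hC.eigenvalues 2 : ℝ) : ℂ) = 0 := by
      rw [Fin.sum_univ_three] at ht
      push_cast
      linear_combination -ht
    exact_mod_cast this
  have hprod : hC.eigenvalues 0 * hC.eigenvalues 1 * hC.eigenvalues 2 = 0 := by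
    have hd := hC.det_eq_prod_eigenvalues
    rw [Fin.prod_univ_three] at hd
    have : C.det = ((hC.eigenvalues 0 * hC.eigenvalues 1 * hC.eigenvalues 2 : ℝ) : ℂ) := by
      rw [hd]; norm_cast
    rw [this] at hdet
    simpa using hdet
  have hnz : ¬ (hC.eigenvalues 0 = 0 ∧ hC.eigenvalues 1 = 0 ∧ hC.eigenvalues 2 = 0) := by
    rintro ⟨ha, hb, hc⟩
    apply h0
    have hall : (RCLike.ofReal ∘ hC.eigenvalues : Fin 3 → ℂ) = 0 := by
      funext i
      fin_cases i <;> simp [ha, hb, hc]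
    have hd0 : Matrix.diagonal (RCLike.ofReal ∘ hC.eigenvalues : Fin 3 → ℂ) = 0 := by
      rw [hall]
      exact Matrix.diagonal_zero
    have := hC.spectral_theorem
    rw [hd0] at this
    simpa using this
  obtain ⟨i, j, hij, hkey⟩ := key3 hC.eigenvalues hsum hprod hnz
  refine ⟨hC.eigenvectorBasis i, hC.eigenvectorBasis j,
    hC.eigenvectorBasis.orthonormal.1 i, hC.eigenvectorBasis.orthonormal.1 j,
    hC.eigenvectorBasis.orthonormal.2 hij.symm, ?_⟩
  intro φ hφ
  have hexp := herm_expansion hC φ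
  rw [hφ] at hexp
  have hre : hC.eigenvalues 0 * ‖(inner ℂ (hC.eigenvectorBasis 0) φ : ℂ)‖ ^ 2
      + hC.eigenvalues 1 * ‖(inner ℂ (hC.eigenvectorBasis 1) φ : ℂ)‖ ^ 2
      + hC.eigenvalues 2 * ‖(inner ℂ (hC.eigenvectorBasis 2) φ : ℂ)‖ ^ 2 = 0 := by
    have : ((hC.eigenvalues 0 * ‖(inner ℂ (hC.eigenvectorBasis 0) φ : ℂ)‖ ^ 2
        + hC.eigenvalues 1 * ‖(inner ℂ (hC.eigenvectorBasis 1) φ : ℂ)‖ ^ 2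
        + hC.eigenvalues 2 * ‖(inner ℂ (hC.eigenvectorBasis 2) φ : ℂ)‖ ^ 2 : ℝ) : ℂ) = 0 := by
      rw [Fin.sum_univ_three] at hexp
      push_cast at hexp ⊢
      linear_combination -hexp
    exact_mod_cast this
  have := hkey (fun i => ‖(inner ℂ (hC.eigenvectorBasis i) φ : ℂ)‖ ^ 2) hre
  rw [norm_inner_symm φ (hC.eigenvectorBasis i), norm_inner_symm φ (hC.eigenvectorBasis j)]
  exact this

lemma parseval (B : OrthonormalBasis (Fin 3) ℂ E3) (ψ : E3) :
    ∑ j, ‖(inner ℂ (B j) ψ : ℂ)‖ ^ 2 = ‖ψ‖ ^ 2 := by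
  have h := B.repr.norm_map ψ
  rw [← h, EuclideanSpace.norm_eq, Real.sq_sqrt (by positivity)]
  refine Finset.sum_congr rfl fun j _ => ?_
  rw [B.repr_apply_apply]

end ThreeBases

/-- In dimension 3, three orthonormal bases cannot distinguish all pure states: there are two
distinct pure states giving the same outcome probabilities for every vector of the three bases. -/
theorem three_bases_insufficient_dim3
    (B₁ B₂ B₃ : OrthonormalBasis (Fin 3) ℂ (EuclideanSpace ℂ (Fin 3))) :
    ∃ ψ₁ ψ₂ : EuclideanSpace ℂ (Fin 3),
      ‖ψ₁‖ = 1 ∧ ‖ψ₂‖ = 1 ∧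
      (¬ ∃ c : ℂ, ψ₁ = c • ψ₂) ∧
      (∀ j : Fin 3, ‖⟪B₁ j, ψ₁⟫_ℂ‖ ^ 2 = ‖⟪B₁ j, ψ₂⟫_ℂ‖ ^ 2) ∧
      (∀ j : Fin 3, ‖⟪B₂ j, ψ₁⟫_ℂ‖ ^ 2 = ‖⟪B₂ j, ψ₂⟫_ℂ‖ ^ 2) ∧
      (∀ j : Fin 3, ‖⟪B₃ j, ψ₁⟫_ℂ‖ ^ 2 = ‖⟪B₃ j, ψ₂⟫_ℂ‖ ^ 2) := by
  classical
  obtain ⟨C, hherm, hC0, htr, hdet, hq⟩ :=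
    exists_C ![B₁ 0, B₁ 1, B₂ 0, B₂ 1, B₃ 0, B₃ 1]
  obtain ⟨ψ₁, ψ₂, hn1, hn2, horth, hmain⟩ := exists_pair hherm hC0 htr hdet
  have hk : ∀ k : Fin 6, ‖(inner ℂ (![B₁ 0, B₁ 1, B₂ 0, B₂ 1, B₃ 0, B₃ 1] k) ψ₁ : ℂ)‖ ^ 2
      = ‖(inner ℂ (![B₁ 0, B₁ 1, B₂ 0, B₂ 1, B₃ 0, B₃ 1] k) ψ₂ : ℂ)‖ ^ 2 :=
    fun k => hmain _ (hq k)
  have hbasis : ∀ (B : OrthonormalBasis (Fin 3) ℂ (EuclideanSpace ℂ (Fin 3))),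
      ‖⟪B 0, ψ₁⟫_ℂ‖ ^ 2 = ‖⟪B 0, ψ₂⟫_ℂ‖ ^ 2 → ‖⟪B 1, ψ₁⟫_ℂ‖ ^ 2 = ‖⟪B 1, ψ₂⟫_ℂ‖ ^ 2 →
      ∀ j, ‖⟪B j, ψ₁⟫_ℂ‖ ^ 2 = ‖⟪B j, ψ₂⟫_ℂ‖ ^ 2 := by
    intro B h0 h1 j
    have p1 := parseval B ψ₁
    have p2 := parseval B ψ₂
    rw [Fin.sum_univ_three, hn1] at p1
    rw [Fin.sum_univ_three, hn2] at p2
    fin_cases j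
    · exact h0
    · exact h1
    · show ‖⟪B 2, ψ₁⟫_ℂ‖ ^ 2 = ‖⟪B 2, ψ₂⟫_ℂ‖ ^ 2
      simp only [one_pow] at p1 p2
      linarith
  refine ⟨ψ₁, ψ₂, hn1, hn2, ?_, ?_, ?_, ?_⟩
  · rintro ⟨c, hc⟩
    have h1 : (inner ℂ ψ₂ ψ₁ : ℂ) = c * (inner ℂ ψ₂ ψ₂ : ℂ) := by rw [hc, inner_smul_right]
    rw [horth] at h1
    have h2 : (inner ℂ ψ₂ ψ₂ : ℂ) = 1 := by
      rw [inner_self_eq_norm_sq_to_K, hn2]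
      norm_num
    rw [h2, mul_one] at h1
    rw [← h1, zero_smul] at hc
    rw [hc] at hn1
    simp at hn1
  · exact hbasis B₁ (hk 0) (hk 1)
  · exact hbasis B₂ (hk 2) (hk 3)
  · exact hbasis B₃ (hk 4) (hk 5)
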